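/- Let σ_r : ℤ^r → ℤ^r be the linear map with σ_r(α_r) = -α_r, σ_r(α_{r-2}) = α_{r-2} + α_r, and σ_r(α_j) = α_j for all other j. If r-1 ∉ Z, then σ_r(Φ_{r,Z} ∪ -Φ_{r,Z}) = Φ_{r,Z} ∪ -Φ_{r,Z}. -/

import Mathlib

/-- The standard basis vector `α_i` of `ℤ^r` (1-indexed). -/
def alphaV (r i : ℕ) : Fin r → ℤ := fun k => if (k : ℕ) + 1 = i then 1 else 0

/-- `η_{i,j} = α_i + ⋯ + α_j` for `i ≤ j`, and `0` for `i > j` (1-indexed). -/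
def eta (r i j : ℕ) : Fin r → ℤ := fun k => if i ≤ (k : ℕ) + 1 ∧ (k : ℕ) + 1 ≤ j then 1 else 0

/-- The root set `Φ_{r,Z}`. -/
def Phi (r : ℕ) (Z : Finset ℕ) : Set (Fin r → ℤ) :=
  {v | ∃ i j, 1 ≤ i ∧ i < j ∧ j ≤ r ∧ v = eta r i (j - 1)} ∪
  {v | ∃ i, 1 ≤ i ∧ i < r ∧ v = eta r i (r - 2) + alphaV r r} ∪
  {v | ∃ i j, 1 ≤ i ∧ i < j ∧ j < r ∧ v = eta r i r + eta r j (r - 2)} ∪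
  {v | ∃ j ∈ Z, v = eta r j r + eta r j (r - 2)}

/-- The root set `Ψ_{r,Y}`. -/
def Psi (r : ℕ) (Y : Finset ℕ) : Set (Fin r → ℤ) :=
  {v | ∃ i j, 1 ≤ i ∧ i ≤ j ∧ j ≤ r ∧ v = eta r i j} ∪
  {v | ∃ i j, 1 ≤ i ∧ i < j ∧ j < r ∧ v = eta r i r + eta r j (r - 1)} ∪
  {v | ∃ j ∈ Y, v = eta r j r + eta r j (r - 1)}

lemma eta_zeroV (r i m : ℕ) (h : m < i ∨ m = 0) : eta r i m = 0 := by
  funext k; simp only [eta, Pi.zero_apply, ite_eq_right_iff, and_imp]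
  intro h1 h2; omega

lemma eta_succ (r i m : ℕ) (h : i ≤ m + 1) : eta r i (m+1) = eta r i m + alphaV r (m+1) := by
  funext k; simp only [eta, alphaV, Pi.add_apply]
  split_ifs <;> omega

lemma eta_split (r i m n : ℕ) (h : n = m + 1) (hi : i ≤ n) :
    eta r i n = eta r i m + alphaV r n := by
  subst h; exact eta_succ r i m hi

lemma eta_self (r i : ℕ) (h : 1 ≤ i) : eta r i i = alphaV r i := by
  funext k; simp only [eta, alphaV]
  split_ifs <;> omega

lemma memA (r : ℕ) (Z : Finset ℕ) (i j : ℕ) (hi : 1 ≤ i) (hij : i < j) (hj : j ≤ r) :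
    eta r i (j-1) ∈ Phi r Z := Or.inl (Or.inl (Or.inl ⟨i, j, hi, hij, hj, rfl⟩))
lemma memB (r : ℕ) (Z : Finset ℕ) (i : ℕ) (hi : 1 ≤ i) (hir : i < r) :
    eta r i (r-2) + alphaV r r ∈ Phi r Z := Or.inl (Or.inl (Or.inr ⟨i, hi, hir, rfl⟩))
lemma memC (r : ℕ) (Z : Finset ℕ) (i j : ℕ) (hi : 1 ≤ i) (hij : i < j) (hj : j < r) :
    eta r i r + eta r j (r-2) ∈ Phi r Z := Or.inl (Or.inr ⟨i, j, hi, hij, hj, rfl⟩)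
lemma memD (r : ℕ) (Z : Finset ℕ) (j : ℕ) (hj : j ∈ Z) :
    eta r j r + eta r j (r-2) ∈ Phi r Z := Or.inr ⟨j, hj, rfl⟩

section helpers

variable {r : ℕ} (hr : 4 ≤ r) (σ : (Fin r → ℤ) →ₗ[ℤ] (Fin r → ℤ))
  (h1 : σ (alphaV r r) = -alphaV r r)
  (h2 : σ (alphaV r (r - 2)) = alphaV r (r - 2) + alphaV r r)
  (h3 : ∀ j, 1 ≤ j → j ≤ r → j ≠ r → j ≠ r - 2 → σ (alphaV r j) = alphaV r j)

include hr h3 in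
lemma sig_low : ∀ m, m ≤ r - 3 → ∀ i, σ (eta r i m) = eta r i m := by
  intro m
  induction m with
  | zero => intro _ i; rw [eta_zeroV r i 0 (Or.inr rfl), map_zero]
  | succ m ih =>
    intro hm i
    by_cases hi : i ≤ m + 1
    · rw [eta_succ r i m hi, map_add, ih (by omega),
        h3 (m+1) (by omega) (by omega) (by omega) (by omega)]
    · rw [eta_zeroV r i (m+1) (Or.inl (by omega)), map_zero]

include hr h2 h3 in
lemma sig_rm2 (i : ℕ) (hi2 : i ≤ r - 2) :
    σ (eta r i (r-2)) = eta r i (r-2) + alphaV r r := by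
  rw [eta_split r i (r-3) (r-2) (by omega) hi2, map_add,
    sig_low hr σ h3 (r-3) le_rfl i, h2]
  abel

include hr h2 h3 in
lemma sig_rm1 (i : ℕ) (hi2 : i ≤ r - 2) :
    σ (eta r i (r-1)) = eta r i (r-1) + alphaV r r := by
  rw [eta_split r i (r-2) (r-1) (by omega) (by omega), map_add,
    sig_rm2 hr σ h2 h3 i hi2, h3 (r-1) (by omega) (by omega) (by omega) (by omega)]
  abel

include hr h1 h2 h3 in
lemma sig_r (i : ℕ) (hi2 : i ≤ r - 2) :
    σ (eta r i r) = eta r i (r-1) := by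
  rw [eta_split r i (r-1) r (by omega) (by omega), map_add,
    sig_rm1 hr σ h2 h3 i hi2, h1]
  abel

include hr h1 h2 h3 in
lemma sig_invol : ∀ v, σ (σ v) = v := by
  have key : σ.comp σ = LinearMap.id := by
    apply (Pi.basisFun ℤ (Fin r)).ext
    intro k
    have hk : (k : ℕ) < r := k.2
    have hb : (Pi.basisFun ℤ (Fin r)) k = alphaV r ((k : ℕ) + 1) := by
      funext k'
      by_cases h : k' = k
      · subst h; simp [alphaV]
      · have h' : ¬((k' : ℕ) + 1 = (k : ℕ) + 1) := fun hc => h (Fin.ext (by omega))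
        simp [alphaV, h, h']; exact fun hc => h (Fin.ext hc)
    rw [hb]
    simp only [LinearMap.comp_apply, LinearMap.id_apply]
    by_cases hkr : (k : ℕ) + 1 = r
    · rw [hkr, h1, map_neg, h1, neg_neg]
    · by_cases hkr2 : (k : ℕ) + 1 = r - 2
      · rw [hkr2, h2, map_add, h2, h1]; abel
      · rw [h3 _ (by omega) (by omega) hkr hkr2, h3 _ (by omega) (by omega) hkr hkr2]
  intro v
  have := DFunLike.congr_fun key v
  simpa using this

end helpers

theorem sigma_r_phi (r : ℕ) (hr : 4 ≤ r) (Z : Finset ℕ) (hZ : Z ⊆ Finset.Icc 1 (r - 1))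
    (hZ' : r - 1 ∉ Z)
    (σ : (Fin r → ℤ) →ₗ[ℤ] (Fin r → ℤ))
    (h1 : σ (alphaV r r) = -alphaV r r)
    (h2 : σ (alphaV r (r - 2)) = alphaV r (r - 2) + alphaV r r)
    (h3 : ∀ j, 1 ≤ j → j ≤ r → j ≠ r → j ≠ r - 2 → σ (alphaV r j) = alphaV r j) :
    σ '' (Phi r Z ∪ -Phi r Z) = Phi r Z ∪ -Phi r Z := by
  -- σ maps Phi into Phi ∪ -Phi
  have fwdPhi : ∀ v ∈ Phi r Z, σ v ∈ Phi r Z ∪ -Phi r Z := by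
    intro v hv
    rcases hv with ((⟨i, j, hi, hij, hj, rfl⟩ | ⟨i, hi, hir, rfl⟩) |
      ⟨i, j, hi, hij, hjr, rfl⟩) | ⟨j, hjZ, rfl⟩
    · -- type A : eta r i (j-1)
      by_cases hlow : j - 1 ≤ r - 3
      · rw [sig_low hr σ h3 (j-1) hlow i]
        exact Or.inl (memA r Z i j hi hij hj)
      · by_cases hjr1 : j = r - 1
        · have hσ : σ (eta r i (j-1)) = eta r i (r-2) + alphaV r r := by
            rw [show j - 1 = r - 2 by omega]
            exact sig_rm2 hr σ h2 h3 i (by omega)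
          rw [hσ]; exact Or.inl (memB r Z i hi (by omega))
        · have hjr : j - 1 = r - 1 := by omega
          rw [hjr]
          by_cases hi2 : i ≤ r - 2
          · have hσ : σ (eta r i (r-1)) = eta r i r + eta r (r-1) (r-2) := by
              rw [sig_rm1 hr σ h2 h3 i hi2,
                eta_split r i (r-1) r (by omega) (by omega),
                eta_zeroV r (r-1) (r-2) (Or.inl (by omega))]
              abel
            rw [hσ]
            exact Or.inl (memC r Z i (r-1) hi (by omega) (by omega))
          · have hieq : i = r - 1 := by omega
            subst hieq
            have hσ : σ (eta r (r-1) (r-1)) = eta r (r-1) (r-1) := by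
              rw [eta_self r (r-1) (by omega),
                h3 (r-1) (by omega) (by omega) (by omega) (by omega)]
            rw [hσ]
            exact Or.inl (memA r Z (r-1) r (by omega) (by omega) le_rfl)
    · -- type B : eta r i (r-2) + alphaV r r
      by_cases hi2 : i ≤ r - 2
      · have hσ : σ (eta r i (r-2) + alphaV r r) = eta r i ((r-1)-1) := by
          rw [map_add, sig_rm2 hr σ h2 h3 i hi2, h1, show (r-1)-1 = r-2 by omega]
          abel
        rw [hσ]
        exact Or.inl (memA r Z i (r-1) hi (by omega) (by omega))
      · have hieq : i = r - 1 := by omega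
        subst hieq
        have hσ : σ (eta r (r-1) (r-2) + alphaV r r)
            = -(eta r (r-1) (r-2) + alphaV r r) := by
          rw [eta_zeroV r (r-1) (r-2) (Or.inl (by omega)), zero_add, h1]
        rw [hσ]
        exact Or.inr (by
          rw [Set.mem_neg, neg_neg]
          exact memB r Z (r-1) (by omega) (by omega))
    · -- type C : eta r i r + eta r j (r-2)
      by_cases hj2 : j ≤ r - 2
      · have hσ : σ (eta r i r + eta r j (r-2)) = eta r i r + eta r j (r-2) := by
          rw [map_add, sig_r hr σ h1 h2 h3 i (by omega), sig_rm2 hr σ h2 h3 j hj2,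
            eta_split r i (r-1) r (by omega) (by omega)]
          abel
        rw [hσ]
        exact Or.inl (memC r Z i j hi hij hjr)
      · have hjeq : j = r - 1 := by omega
        subst hjeq
        have hσ : σ (eta r i r + eta r (r-1) (r-2)) = eta r i (r-1) := by
          rw [eta_zeroV r (r-1) (r-2) (Or.inl (by omega)), add_zero,
            sig_r hr σ h1 h2 h3 i (by omega)]
        rw [hσ]
        exact Or.inl (memA r Z i r hi (by omega) le_rfl)
    · -- type D : j ∈ Z
      have hjb := hZ hjZ
      rw [Finset.mem_Icc] at hjb
      have hj2 : j ≤ r - 2 := by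
        rcases hjb with ⟨hj1, hjr1⟩
        have : j ≠ r - 1 := fun h => hZ' (h ▸ hjZ)
        omega
      have hσ : σ (eta r j r + eta r j (r-2)) = eta r j r + eta r j (r-2) := by
        rw [map_add, sig_r hr σ h1 h2 h3 j hj2, sig_rm2 hr σ h2 h3 j hj2,
          eta_split r j (r-1) r (by omega) (by omega)]
        abel
      rw [hσ]
      exact Or.inl (memD r Z j hjZ)
  have negClosed : ∀ v ∈ Phi r Z ∪ -Phi r Z, -v ∈ Phi r Z ∪ -Phi r Z := by
    intro v hv
    rcases hv with h | h
    · exact Or.inr (by rwa [Set.mem_neg, neg_neg])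
    · exact Or.inl (by rwa [Set.mem_neg] at h)
  have fwd : ∀ v ∈ Phi r Z ∪ -Phi r Z, σ v ∈ Phi r Z ∪ -Phi r Z := by
    intro v hv
    rcases hv with h | h
    · exact fwdPhi v h
    · rw [Set.mem_neg] at h
      have : σ v = -(σ (-v)) := by rw [map_neg, neg_neg]
      rw [this]
      exact negClosed _ (fwdPhi _ h)
  have invol := sig_invol hr σ h1 h2 h3
  apply Set.eq_of_subset_of_subset
  · rintro w ⟨v, hv, rfl⟩
    exact fwd v hv
  · intro v hv
    exact ⟨σ v, fwd v hv, invol v⟩
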